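/- There exists a probability measure μ on ℝ⁴ with mgf G and domain of finiteness V', and a continuous curve c : [0,1] → ∂V' (the topological boundary of V') with c([0,1)) ⊂ V' and c(1) ∈ V', such that G(c(1)) < ∞ and lim_{t↑1} G(c(t)) = ∞. -/

import Mathlib

open MeasureTheory Real Set Filter Topology
open scoped ENNReal

namespace MgfBlowup

noncomputable def pt (k : ℕ × ℕ) : ℝ × ℝ × ℝ × ℝ :=
  ((k.1 : ℝ) + 1, (((k.1 : ℝ) + 1) ^ 2, ((k.2 : ℝ) + 1, 0)))

noncomputable def w1 (n : ℕ) : ℝ≥0∞ :=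
  ENNReal.ofReal (Real.exp (-((n : ℝ) + 1) ^ 2) / ((n : ℝ) + 1) ^ 2)

noncomputable def w2 (m : ℕ) : ℝ≥0∞ :=
  ENNReal.ofReal (Real.exp (-((m : ℝ) + 1)) / ((m : ℝ) + 1) ^ 2)

noncomputable def Z1 : ℝ≥0∞ := ∑' n, w1 n
noncomputable def Z2 : ℝ≥0∞ := ∑' m, w2 m

noncomputable def K : ℝ≥0∞ := ∑' n : ℕ, ENNReal.ofReal (1 / ((n : ℝ) + 1) ^ 2)

lemma summable_basel : Summable (fun n : ℕ => 1 / ((n : ℝ) + 1) ^ 2) := by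
  have h : Summable (fun n : ℕ => 1 / ((n : ℝ)) ^ 2) :=
    summable_one_div_nat_pow.mpr one_lt_two
  have := (summable_nat_add_iff 1).mpr h
  refine this.congr fun n => ?_
  push_cast
  ring

lemma K_ne_top : K ≠ ⊤ := by
  rw [K, ← ENNReal.ofReal_tsum_of_nonneg (fun n => by positivity) summable_basel]
  exact ENNReal.ofReal_ne_top

lemma Z1_ne_top : Z1 ≠ ⊤ := by
  refine ne_top_of_le_ne_top K_ne_top (ENNReal.tsum_le_tsum fun n => ?_)
  refine ENNReal.ofReal_le_ofReal ?_
  have h1 : Real.exp (-((n : ℝ) + 1) ^ 2) ≤ 1 := by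
    rw [Real.exp_le_one_iff]
    exact neg_nonpos.mpr (by positivity)
  gcongr

lemma Z2_ne_top : Z2 ≠ ⊤ := by
  refine ne_top_of_le_ne_top K_ne_top (ENNReal.tsum_le_tsum fun n => ?_)
  refine ENNReal.ofReal_le_ofReal ?_
  have h1 : Real.exp (-((n : ℝ) + 1)) ≤ 1 := by
    rw [Real.exp_le_one_iff]
    exact neg_nonpos.mpr (by positivity)
  gcongr

lemma Z1_pos : 0 < Z1 :=
  lt_of_lt_of_le (ENNReal.ofReal_pos.mpr (by positivity)) (ENNReal.le_tsum 0)

lemma Z1_ne_zero : Z1 ≠ 0 := Z1_pos.ne' 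

lemma Z2_pos : 0 < Z2 :=
  lt_of_lt_of_le (ENNReal.ofReal_pos.mpr (by positivity)) (ENNReal.le_tsum 0)

lemma Z2_ne_zero : Z2 ≠ 0 := Z2_pos.ne' 

noncomputable def coef (k : ℕ × ℕ) : ℝ≥0∞ := (w1 k.1 * Z1⁻¹) * (w2 k.2 * Z2⁻¹)

noncomputable def μBlow : Measure (ℝ × ℝ × ℝ × ℝ) :=
  Measure.sum (fun k : ℕ × ℕ => coef k • Measure.dirac (pt k))

lemma tsum_prod_mul (f g : ℕ → ℝ≥0∞) :
    ∑' k : ℕ × ℕ, f k.1 * g k.2 = (∑' n, f n) * (∑' m, g m) := by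
  rw [ENNReal.tsum_prod']
  simp_rw [ENNReal.tsum_mul_left]
  rw [ENNReal.tsum_mul_right]

lemma tsum_coef : ∑' k : ℕ × ℕ, coef k = 1 := by
  have h1 : ∑' n, w1 n * Z1⁻¹ = 1 := by
    rw [ENNReal.tsum_mul_right]
    exact ENNReal.mul_inv_cancel Z1_ne_zero Z1_ne_top
  have h2 : ∑' m, w2 m * Z2⁻¹ = 1 := by
    rw [ENNReal.tsum_mul_right]
    exact ENNReal.mul_inv_cancel Z2_ne_zero Z2_ne_top
  simp only [coef]
  rw [tsum_prod_mul (fun n => w1 n * Z1⁻¹) (fun m => w2 m * Z2⁻¹), h1, h2, mul_one]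

instance : IsProbabilityMeasure μBlow := by
  constructor
  rw [μBlow, Measure.sum_apply _ MeasurableSet.univ]
  simp only [Measure.smul_apply, measure_univ, smul_eq_mul, mul_one]
  exact tsum_coef

lemma lintegral_μBlow (g : ℝ × ℝ × ℝ × ℝ → ℝ≥0∞) (hg : Measurable g) :
    ∫⁻ ξ, g ξ ∂μBlow = ∑' k, coef k * g (pt k) := by
  rw [μBlow, lintegral_sum_measure]
  congr 1
  ext k
  rw [lintegral_smul_measure, lintegral_dirac' _ hg, smul_eq_mul]

noncomputable def A (u v : ℝ) (n : ℕ) : ℝ≥0∞ :=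
  ENNReal.ofReal (Real.exp (u * ((n : ℝ) + 1) + (v - 1) * ((n : ℝ) + 1) ^ 2)
    / ((n : ℝ) + 1) ^ 2) * Z1⁻¹

noncomputable def B (s : ℝ) (m : ℕ) : ℝ≥0∞ :=
  ENNReal.ofReal (Real.exp ((s - 1) * ((m : ℝ) + 1)) / ((m : ℝ) + 1) ^ 2) * Z2⁻¹

noncomputable def F1 (u v : ℝ) : ℝ≥0∞ := ∑' n, A u v n
noncomputable def F2 (s : ℝ) : ℝ≥0∞ := ∑' m, B s m

lemma coef_term (u v s r : ℝ) (k : ℕ × ℕ) :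
    coef k * ENNReal.ofReal (Real.exp (u * (pt k).1 + v * (pt k).2.1 +
      s * (pt k).2.2.1 + r * (pt k).2.2.2)) = A u v k.1 * B s k.2 := by
  obtain ⟨n, m⟩ := k
  have hx0 : (0:ℝ) < (n : ℝ) + 1 := by positivity
  have hy0 : (0:ℝ) < (m : ℝ) + 1 := by positivity
  show (w1 n * Z1⁻¹) * (w2 m * Z2⁻¹) * ENNReal.ofReal
      (Real.exp (u * ((n : ℝ) + 1) + v * ((n : ℝ) + 1) ^ 2 +
        s * ((m : ℝ) + 1) + r * 0)) = A u v n * B s m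
  have hE : u * ((n : ℝ) + 1) + v * ((n : ℝ) + 1) ^ 2 +
      s * ((m : ℝ) + 1) + r * 0 =
      u * ((n : ℝ) + 1) + v * ((n : ℝ) + 1) ^ 2 + s * ((m : ℝ) + 1) := by ring
  rw [hE]
  have hcomb : Real.exp (-((n : ℝ) + 1) ^ 2) * Real.exp (-((m : ℝ) + 1)) *
      Real.exp (u * ((n : ℝ) + 1) + v * ((n : ℝ) + 1) ^ 2 + s * ((m : ℝ) + 1)) =
      Real.exp (u * ((n : ℝ) + 1) + (v - 1) * ((n : ℝ) + 1) ^ 2) *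
        Real.exp ((s - 1) * ((m : ℝ) + 1)) := by
    rw [← Real.exp_add, ← Real.exp_add, ← Real.exp_add]
    congr 1
    ring
  have genkey : ∀ e1 e2 e3 P Q x2 y2 : ℝ, e1 * e2 * e3 = P * Q →
      e1 / x2 * (e2 / y2) * e3 = P / x2 * (Q / y2) := by
    intro e1 e2 e3 P Q x2 y2 h
    rw [div_mul_div_comm, div_mul_eq_mul_div, h, div_mul_div_comm]
  have key : Real.exp (-((n : ℝ) + 1) ^ 2) / ((n : ℝ) + 1) ^ 2 *
      (Real.exp (-((m : ℝ) + 1)) / ((m : ℝ) + 1) ^ 2) *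
      Real.exp (u * ((n : ℝ) + 1) + v * ((n : ℝ) + 1) ^ 2 + s * ((m : ℝ) + 1)) =
      Real.exp (u * ((n : ℝ) + 1) + (v - 1) * ((n : ℝ) + 1) ^ 2) / ((n : ℝ) + 1) ^ 2 *
        (Real.exp ((s - 1) * ((m : ℝ) + 1)) / ((m : ℝ) + 1) ^ 2) :=
    genkey _ _ _ _ _ _ _ hcomb
  have hofReal : w1 n * w2 m * ENNReal.ofReal
      (Real.exp (u * ((n : ℝ) + 1) + v * ((n : ℝ) + 1) ^ 2 + s * ((m : ℝ) + 1))) =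
      ENNReal.ofReal (Real.exp (u * ((n : ℝ) + 1) + (v - 1) * ((n : ℝ) + 1) ^ 2)
        / ((n : ℝ) + 1) ^ 2) *
      ENNReal.ofReal (Real.exp ((s - 1) * ((m : ℝ) + 1)) / ((m : ℝ) + 1) ^ 2) := by
    rw [w1, w2, ← ENNReal.ofReal_mul (by positivity),
      ← ENNReal.ofReal_mul (by positivity), key,
      ENNReal.ofReal_mul (by positivity)]
  rw [A, B, mul_mul_mul_comm, mul_right_comm, hofReal, mul_mul_mul_comm]

lemma G_eval (G : ℝ × ℝ × ℝ × ℝ → ℝ≥0∞)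
    (hG : ∀ w, G w = ∫⁻ ξ, ENNReal.ofReal
      (Real.exp (w.1 * ξ.1 + w.2.1 * ξ.2.1 + w.2.2.1 * ξ.2.2.1 +
        w.2.2.2 * ξ.2.2.2)) ∂μBlow) (u v s r : ℝ) :
    G (u, v, s, r) = F1 u v * F2 s := by
  have hmeas : Measurable fun ξ : ℝ × ℝ × ℝ × ℝ => ENNReal.ofReal
      (Real.exp (u * ξ.1 + v * ξ.2.1 + s * ξ.2.2.1 + r * ξ.2.2.2)) := by
    fun_prop
  rw [hG, lintegral_μBlow _ hmeas]
  simp_rw [coef_term u v s r]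
  exact tsum_prod_mul _ _

lemma F1_lt_top (u v : ℝ)
    (h : ∃ Bd : ℝ, ∀ n : ℕ,
      u * ((n : ℝ) + 1) + (v - 1) * ((n : ℝ) + 1) ^ 2 ≤ Bd) :
    F1 u v < ⊤ := by
  obtain ⟨Bd, hBd⟩ := h
  have hle : F1 u v ≤ ENNReal.ofReal (Real.exp Bd) * K * Z1⁻¹ := by
    rw [F1]
    have hA : ∀ n : ℕ, A u v n ≤
        ENNReal.ofReal (Real.exp Bd) * ENNReal.ofReal (1 / ((n : ℝ) + 1) ^ 2) * Z1⁻¹ := by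
      intro n
      rw [A, ← ENNReal.ofReal_mul (Real.exp_pos _).le]
      gcongr
      have hx : (0:ℝ) < ((n : ℝ) + 1) ^ 2 := by positivity
      rw [div_le_iff₀ hx] at *
      calc Real.exp (u * ((n : ℝ) + 1) + (v - 1) * ((n : ℝ) + 1) ^ 2)
          ≤ Real.exp Bd := Real.exp_le_exp.mpr (hBd n)
        _ = Real.exp Bd * (1 / ((n : ℝ) + 1) ^ 2) * ((n : ℝ) + 1) ^ 2 := by
            field_simp
    refine le_trans (ENNReal.tsum_le_tsum hA) ?_
    rw [ENNReal.tsum_mul_right, ENNReal.tsum_mul_left, K]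
  refine lt_of_le_of_lt hle (ENNReal.mul_lt_top ?_ ?_)
  · exact ENNReal.mul_lt_top ENNReal.ofReal_lt_top K_ne_top.lt_top
  · exact ENNReal.inv_lt_top.mpr (pos_iff_ne_zero.mpr Z1_ne_zero)

lemma F2_lt_top (s : ℝ)
    (h : ∃ Bd : ℝ, ∀ m : ℕ, (s - 1) * ((m : ℝ) + 1) ≤ Bd) :
    F2 s < ⊤ := by
  obtain ⟨Bd, hBd⟩ := h
  have hle : F2 s ≤ ENNReal.ofReal (Real.exp Bd) * K * Z2⁻¹ := by
    rw [F2]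
    have hB : ∀ m : ℕ, B s m ≤
        ENNReal.ofReal (Real.exp Bd) * ENNReal.ofReal (1 / ((m : ℝ) + 1) ^ 2) * Z2⁻¹ := by
      intro m
      rw [B, ← ENNReal.ofReal_mul (Real.exp_pos _).le]
      gcongr
      have hx : (0:ℝ) < ((m : ℝ) + 1) ^ 2 := by positivity
      rw [div_le_iff₀ hx] at *
      calc Real.exp ((s - 1) * ((m : ℝ) + 1))
          ≤ Real.exp Bd := Real.exp_le_exp.mpr (hBd m)
        _ = Real.exp Bd * (1 / ((m : ℝ) + 1) ^ 2) * ((m : ℝ) + 1) ^ 2 := by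
            field_simp
    refine le_trans (ENNReal.tsum_le_tsum hB) ?_
    rw [ENNReal.tsum_mul_right, ENNReal.tsum_mul_left, K]
  refine lt_of_le_of_lt hle (ENNReal.mul_lt_top ?_ ?_)
  · exact ENNReal.mul_lt_top ENNReal.ofReal_lt_top K_ne_top.lt_top
  · exact ENNReal.inv_lt_top.mpr (pos_iff_ne_zero.mpr Z2_ne_zero)

lemma F1_pos (u v : ℝ) : F1 u v ≠ 0 := by
  have h0 : A u v 0 ≠ 0 := by
    rw [A]
    exact mul_ne_zero
      ((ENNReal.ofReal_pos.mpr (by positivity)).ne')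
      (ENNReal.inv_ne_zero.mpr Z1_ne_top)
  exact fun h => h0 (le_antisymm (h ▸ ENNReal.le_tsum 0) zero_le)

lemma cube_le_exp {z : ℝ} (hz : 0 ≤ z) : z ^ 3 / 6 ≤ Real.exp z := by
  have h := Real.sum_le_exp_of_nonneg hz 4
  simp [Finset.sum_range_succ, Nat.factorial] at h
  nlinarith [sq_nonneg z]

lemma F2_top {s : ℝ} (hs : 1 < s) : F2 s = ⊤ := by
  have hδ : (0:ℝ) < s - 1 := by linarith
  have hterm : ∀ m : ℕ,
      ENNReal.ofReal ((s - 1) ^ 3 / 6) * Z2⁻¹ ≤ B s m := by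
    intro m
    have hy : (1:ℝ) ≤ (m : ℝ) + 1 := by
      have : (0:ℝ) ≤ (m : ℝ) := Nat.cast_nonneg m
      linarith
    rw [B]
    refine mul_le_mul_left (ENNReal.ofReal_le_ofReal ?_) _
    have hcube := cube_le_exp (mul_nonneg hδ.le (by linarith : (0:ℝ) ≤ (m : ℝ) + 1))
    rw [div_le_div_iff₀ (by norm_num) (by positivity : (0:ℝ) < ((m : ℝ) + 1) ^ 2)]
    have hmono : ((m:ℝ)+1)^2 ≤ ((m:ℝ)+1)^3 := pow_le_pow_right₀ hy (by norm_num)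
    have h3 : (0:ℝ) ≤ (s-1)^3 := by positivity
    nlinarith [hcube, mul_le_mul_of_nonneg_left hmono h3]
  have htop : (⊤ : ℝ≥0∞) ≤ F2 s := by
    calc (⊤ : ℝ≥0∞) = (∑' _ : ℕ, ENNReal.ofReal ((s - 1) ^ 3 / 6)) * Z2⁻¹ := by
          rw [ENNReal.tsum_const_eq_top_of_ne_zero
            (ENNReal.ofReal_pos.mpr (by positivity)).ne']
          rw [ENNReal.top_mul (ENNReal.inv_ne_zero.mpr Z2_ne_top)]
      _ = ∑' _ : ℕ, ENNReal.ofReal ((s - 1) ^ 3 / 6) * Z2⁻¹ := by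
          rw [ENNReal.tsum_mul_right]
      _ ≤ ∑' m, B s m := ENNReal.tsum_le_tsum hterm
  exact top_le_iff.mp htop

lemma exponent_identity (ε X : ℝ) (h0 : 0 < ε) :
    ε * X - ε ^ 3 * X ^ 2 = 1 / (4 * ε) - ε ^ 3 * (X - 1 / (2 * ε ^ 2)) ^ 2 := by
  field_simp
  ring

lemma F1_blowup (ε : ℝ) (h0 : 0 < ε) (h1 : ε ≤ 1) :
    ENNReal.ofReal (Real.exp (1 / (4 * ε) - 1) * (ε ^ 4 / 4)) * Z1⁻¹ ≤
      F1 ε (1 - ε ^ 3) := by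
  set nn := ⌈1 / (2 * ε ^ 2)⌉₊ with hnn
  have hpos : (0:ℝ) < 1 / (2 * ε ^ 2) := by positivity
  have h1n : 1 ≤ nn := Nat.one_le_ceil_iff.mpr hpos
  set X : ℝ := (nn : ℝ) with hX
  have hX1 : 1 / (2 * ε ^ 2) ≤ X := Nat.le_ceil _
  have hX2 : X ≤ 1 / (2 * ε ^ 2) + 1 := (Nat.ceil_lt_add_one hpos.le).le
  have hXpos : (0:ℝ) < X := lt_of_lt_of_le hpos hX1
  have hε2 : (0:ℝ) < ε ^ 2 := by positivity
  have hinv : (1:ℝ) ≤ 1 / ε ^ 2 := by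
    rw [le_div_iff₀ hε2]; nlinarith
  have hX2' : X ≤ 2 / ε ^ 2 := by
    have e1 : (2:ℝ) / ε ^ 2 = 2 * (1 / ε ^ 2) := by ring
    have e2 : (1:ℝ) / (2 * ε ^ 2) = (1 / 2) * (1 / ε ^ 2) := by ring
    rw [e1]; rw [e2] at hX2; linarith
  have hXe : X * ε ^ 2 ≤ 2 := by
    rw [← le_div_iff₀ hε2]; exact hX2'
  have hX4 : ε ^ 4 / 4 ≤ 1 / X ^ 2 := by
    rw [div_le_div_iff₀ (by norm_num) (by positivity)]
    have h4 : (X * ε ^ 2) * (X * ε ^ 2) ≤ 2 * 2 :=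
      mul_le_mul hXe hXe (by positivity) (by norm_num)
    nlinarith [h4]
  have h_expo : 1 / (4 * ε) - 1 ≤ ε * X - ε ^ 3 * X ^ 2 := by
    have hid := exponent_identity ε X h0
    have hd0 : 0 ≤ X - 1 / (2 * ε ^ 2) := by linarith
    have hd1 : X - 1 / (2 * ε ^ 2) ≤ 1 := by linarith
    have hsq : (X - 1 / (2 * ε ^ 2)) ^ 2 ≤ 1 := by nlinarith
    have hε3 : ε ^ 3 ≤ 1 := by nlinarith
    nlinarith
  have hreal : Real.exp (1 / (4 * ε) - 1) * (ε ^ 4 / 4) ≤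
      Real.exp (ε * X + (1 - ε ^ 3 - 1) * X ^ 2) / X ^ 2 := by
    have harg : ε * X + (1 - ε ^ 3 - 1) * X ^ 2 = ε * X - ε ^ 3 * X ^ 2 := by ring
    rw [harg]
    calc Real.exp (1 / (4 * ε) - 1) * (ε ^ 4 / 4)
        ≤ Real.exp (ε * X - ε ^ 3 * X ^ 2) * (1 / X ^ 2) := by
          exact mul_le_mul (Real.exp_le_exp.mpr h_expo) hX4 (by positivity)
            (Real.exp_pos _).le
      _ = Real.exp (ε * X - ε ^ 3 * X ^ 2) / X ^ 2 := by ring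
  have hn1 : ((nn - 1 : ℕ) : ℝ) + 1 = X := by
    rw [hX]
    push_cast [h1n]
    ring
  refine le_trans ?_ (ENNReal.le_tsum (f := A ε (1 - ε ^ 3)) (nn - 1))
  rw [A, hn1]
  exact mul_le_mul_left (ENNReal.ofReal_le_ofReal hreal) _

lemma tendsto_L :
    Tendsto (fun ε : ℝ => Real.exp (1 / (4 * ε) - 1) * (ε ^ 4 / 4))
      (𝓝[>] (0:ℝ)) atTop := by
  have h1 : Tendsto (fun ε : ℝ => 1 / (4 * ε)) (𝓝[>] (0:ℝ)) atTop := by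
    have h := (tendsto_inv_nhdsGT_zero (𝕜 := ℝ)).const_mul_atTop
      (r := (1/4 : ℝ)) (by norm_num)
    exact h.congr fun ε => by ring
  have h2 := (Real.tendsto_exp_div_pow_atTop 4).comp h1
  have h3 := h2.const_mul_atTop (r := (Real.exp 1)⁻¹ / 1024) (by positivity)
  refine h3.congr' ?_
  filter_upwards [self_mem_nhdsWithin] with ε hε
  have hε0 : (0:ℝ) < ε := hε
  show (Real.exp 1)⁻¹ / 1024 * (Real.exp (1 / (4 * ε)) / (1 / (4 * ε)) ^ 4) =
    Real.exp (1 / (4 * ε) - 1) * (ε ^ 4 / 4)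
  rw [Real.exp_sub]
  field_simp
  ring


lemma curve_bound (ε : ℝ) (h0 : 0 ≤ ε) (n : ℕ) :
    ε * ((n : ℝ) + 1) + ((1 - ε ^ 3) - 1) * ((n : ℝ) + 1) ^ 2 ≤ 1 + 1 / (4 * ε) := by
  set x : ℝ := (n : ℝ) + 1
  have harg : ε * x + ((1 - ε ^ 3) - 1) * x ^ 2 = ε * x - ε ^ 3 * x ^ 2 := by ring
  rw [harg]
  rcases h0.eq_or_lt with h | h
  · rw [← h]
    norm_num
  · have hid := exponent_identity ε x h
    nlinarith [sq_nonneg (x - 1 / (2 * ε ^ 2)), pow_pos h 3,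
      mul_nonneg (pow_pos h 3).le (sq_nonneg (x - 1 / (2 * ε ^ 2)))]

lemma F1_curve_lt_top (ε : ℝ) (h0 : 0 ≤ ε) : F1 ε (1 - ε ^ 3) < ⊤ :=
  F1_lt_top _ _ ⟨1 + 1 / (4 * ε), curve_bound ε h0⟩

lemma F2_one_lt_top : F2 1 < ⊤ :=
  F2_lt_top 1 ⟨0, fun m => by norm_num⟩

lemma B_one_zero : B 1 0 = Z2⁻¹ := by
  rw [B]
  norm_num

lemma Z2_inv_le_F2_one : Z2⁻¹ ≤ F2 1 :=
  B_one_zero ▸ ENNReal.le_tsum 0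

end MgfBlowup

theorem exists_mgf_blowup_curve_along_boundary :
    ∃ μ : Measure (ℝ × ℝ × ℝ × ℝ), IsProbabilityMeasure μ ∧
      ∀ G : ℝ × ℝ × ℝ × ℝ → ℝ≥0∞,
        (∀ w, G w = ∫⁻ ξ, ENNReal.ofReal
            (Real.exp (w.1 * ξ.1 + w.2.1 * ξ.2.1 + w.2.2.1 * ξ.2.2.1 +
              w.2.2.2 * ξ.2.2.2)) ∂μ) →
        ∃ c : ℝ → ℝ × ℝ × ℝ × ℝ, ContinuousOn c (Icc 0 1) ∧
          (∀ t ∈ Icc (0 : ℝ) 1, c t ∈ frontier {w | G w < ⊤}) ∧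
          (∀ t ∈ Ico (0 : ℝ) 1, c t ∈ {w | G w < ⊤}) ∧
          c 1 ∈ {w | G w < ⊤} ∧ G (c 1) < ⊤ ∧
          Tendsto (fun t => G (c t)) (𝓝[Ico (0 : ℝ) 1] 1) (𝓝 ⊤) := by
  classical
  refine ⟨MgfBlowup.μBlow, inferInstance, ?_⟩
  intro G hG
  have hGe : ∀ u v s r : ℝ, G (u, v, s, r) = MgfBlowup.F1 u v * MgfBlowup.F2 s :=
    MgfBlowup.G_eval G hG
  set c : ℝ → ℝ × ℝ × ℝ × ℝ :=
    fun t => (1 - t, (1 - (1 - t) ^ 3, ((1 : ℝ), (0 : ℝ)))) with hc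
  have hGc : ∀ t : ℝ, G (c t) =
      MgfBlowup.F1 (1 - t) (1 - (1 - t) ^ 3) * MgfBlowup.F2 1 := fun t =>
    hGe (1 - t) (1 - (1 - t) ^ 3) 1 0
  have hfin : ∀ t ∈ Icc (0 : ℝ) 1, G (c t) < ⊤ := by
    intro t ht
    rw [hGc t]
    exact ENNReal.mul_lt_top
      (MgfBlowup.F1_curve_lt_top (1 - t) (by linarith [ht.2]))
      MgfBlowup.F2_one_lt_top
  have hnotint : ∀ t : ℝ, c t ∉ interior {w | G w < ⊤} := by
    intro t hint
    have hq : ∀ j : ℕ,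
        ((1 - t : ℝ), (1 - (1 - t) ^ 3, ((1 + 1 / ((j : ℝ) + 1) : ℝ), (0 : ℝ))))
          ∉ {w : ℝ × ℝ × ℝ × ℝ | G w < ⊤} := by
      intro j
      simp only [mem_setOf_eq, not_lt, top_le_iff]
      rw [hGe (1 - t) (1 - (1 - t) ^ 3) (1 + 1 / ((j : ℝ) + 1)) 0,
        MgfBlowup.F2_top (by
          have : (0:ℝ) < 1 / ((j : ℝ) + 1) := by positivity
          linarith)]
      exact ENNReal.mul_top (MgfBlowup.F1_pos _ _)
    have htend : Tendsto (fun j : ℕ =>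
        ((1 - t : ℝ), (1 - (1 - t) ^ 3, ((1 + 1 / ((j : ℝ) + 1) : ℝ), (0 : ℝ)))))
        atTop (𝓝 (c t)) := by
      rw [hc]
      refine Tendsto.prodMk_nhds tendsto_const_nhds
        (Tendsto.prodMk_nhds tendsto_const_nhds
          (Tendsto.prodMk_nhds ?_ tendsto_const_nhds))
      have h0 := tendsto_one_div_add_atTop_nhds_zero_nat (𝕜 := ℝ)
      have := tendsto_const_nhds (x := (1:ℝ)) (f := atTop (α := ℕ)) |>.add h0
      simpa using this
    have hclos : c t ∈ closure {w : ℝ × ℝ × ℝ × ℝ | G w < ⊤}ᶜ :=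
      mem_closure_of_tendsto htend (Eventually.of_forall fun j => hq j)
    rw [closure_compl] at hclos
    exact hclos hint
  refine ⟨c, ?_, ?_, ?_, ?_, ?_, ?_⟩
  · refine Continuous.continuousOn ?_
    rw [hc]
    fun_prop
  · intro t ht
    rw [frontier_eq_closure_inter_closure]
    refine ⟨subset_closure (hfin t ht), ?_⟩
    rw [closure_compl]
    exact hnotint t
  · intro t ht
    exact hfin t (Ico_subset_Icc_self ht)
  · exact hfin 1 (by norm_num)
  · exact hfin 1 (by norm_num)
  · have hεmap : Tendsto (fun t : ℝ => 1 - t) (𝓝[Ico (0:ℝ) 1] 1) (𝓝[>] (0:ℝ)) := by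
      rw [tendsto_nhdsWithin_iff]
      constructor
      · refine Tendsto.mono_left ?_ nhdsWithin_le_nhds
        have h : Tendsto (fun t : ℝ => 1 - t) (𝓝 1) (𝓝 (1 - 1)) :=
          Continuous.tendsto (by fun_prop) 1
        simpa using h
      · filter_upwards [self_mem_nhdsWithin] with t ht
        exact sub_pos.mpr ht.2
    have hL := MgfBlowup.tendsto_L.comp hεmap
    have hof : Tendsto (fun t : ℝ => ENNReal.ofReal
        (Real.exp (1 / (4 * (1 - t)) - 1) * ((1 - t) ^ 4 / 4)))
        (𝓝[Ico (0:ℝ) 1] 1) (𝓝 ⊤) := ENNReal.tendsto_ofReal_atTop.comp hL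
    have hCne : (MgfBlowup.Z1⁻¹ * MgfBlowup.Z2⁻¹ : ℝ≥0∞) ≠ 0 :=
      mul_ne_zero (ENNReal.inv_ne_zero.mpr MgfBlowup.Z1_ne_top)
        (ENNReal.inv_ne_zero.mpr MgfBlowup.Z2_ne_top)
    have hmul := ENNReal.Tendsto.mul_const (b := MgfBlowup.Z1⁻¹ * MgfBlowup.Z2⁻¹)
      hof (Or.inl (by simp : (⊤ : ℝ≥0∞) ≠ 0))
    rw [ENNReal.top_mul hCne] at hmul
    refine tendsto_nhds_top_mono hmul ?_
    filter_upwards [self_mem_nhdsWithin] with t ht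
    have hε0 : (0:ℝ) < 1 - t := sub_pos.mpr ht.2
    have hε1 : (1 - t : ℝ) ≤ 1 := by linarith [ht.1]
    calc ENNReal.ofReal (Real.exp (1 / (4 * (1 - t)) - 1) * ((1 - t) ^ 4 / 4)) *
          (MgfBlowup.Z1⁻¹ * MgfBlowup.Z2⁻¹)
        = (ENNReal.ofReal (Real.exp (1 / (4 * (1 - t)) - 1) * ((1 - t) ^ 4 / 4)) *
            MgfBlowup.Z1⁻¹) * MgfBlowup.Z2⁻¹ := by rw [mul_assoc]
      _ ≤ MgfBlowup.F1 (1 - t) (1 - (1 - t) ^ 3) * MgfBlowup.F2 1 :=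
          mul_le_mul' (MgfBlowup.F1_blowup (1 - t) hε0 hε1)
            MgfBlowup.Z2_inv_le_F2_one
      _ = G (c t) := (hGc t).symm
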